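/- Let n and C be integers with 1 ≤ n ≤ C, and let K' := { g ∈ GL₂(F) : g₁₁ ∈ 1 + pⁿ, g₁₂ ∈ p^C, g₂₁ ∈ ϖ^{n−C}·o, g₂₂ ∈ o^× }. Assume L/F is ramified and v(a) = 0, let u₀ ∈ o satisfy c·u₀² + b·u₀ + a ∈ p, and set u₀' := −u₀/a ∈ o^×. Then the elements t(1, y) for y in a set of representatives of { y ∈ o/p^C : y − u₀' ∉ p }, together with t(1, u₀' + y) for y in a set of representatives of p/p^{C+1}, together with t(x, 1) for x in a set of representatives of p/p^C, form a complete irredundant set of representatives for the cosets of T(F) ∩ Z(F)·K' in T(F): every element of T(F) lies in t·(T(F) ∩ Z(F)·K') for exactly one t in this family. -/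

import Mathlib

open scoped Pointwise
open Matrix

noncomputable section

abbrev Zm0 : Type := WithZero (Multiplicative ℤ)

/-- `ev n` is the value (in `ℤₘ₀ = WithZero (Multiplicative ℤ)`) of an element of additive
valuation `n`; thus `x ∈ 𝔭^n` iff `v x ≤ ev n`, `x ∈ 𝔬` iff `v x ≤ ev 0`, and `x ∈ 𝔬^×` iff
`v x = ev 0`. -/
def ev (n : ℤ) : Zm0 := ((Multiplicative.ofAdd (-n) : Multiplicative ℤ) : Zm0)

variable {F : Type*} [Field F]

/-- the matrix t(x,y) = [[x, cy],[−ay, x−by]] -/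
def tmat (a b c x y : F) : Matrix (Fin 2) (Fin 2) F :=
  !![x, c * y; -(a * y), x - b * y]

/-- the torus T(F) ⊆ GL₂(F), as a set of matrices -/
def TSet (a b c : F) : Set (Matrix (Fin 2) (Fin 2) F) :=
  {m | ∃ x y : F, x ^ 2 - b * x * y + a * c * y ^ 2 ≠ 0 ∧ m = tmat a b c x y}

/-- Z(F): the invertible scalar matrices -/
def ZF (F : Type*) [Field F] : Set (Matrix (Fin 2) (Fin 2) F) :=
  {m | ∃ z : F, z ≠ 0 ∧ m = z • (1 : Matrix (Fin 2) (Fin 2) F)}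

/-- the compact subgroup
K' = { g : g₁₁ ∈ 1 + 𝔭ⁿ, g₁₂ ∈ 𝔭^C, g₂₁ ∈ ϖ^{n−C}·𝔬, g₂₂ ∈ 𝔬^× } -/
def Kp (v : Valuation F Zm0) (n C : ℕ) : Set (Matrix (Fin 2) (Fin 2) F) :=
  {g | v (g 0 0 - 1) ≤ ev n ∧ v (g 0 1) ≤ ev C ∧
       v (g 1 0) ≤ ev ((n : ℤ) - C) ∧ v (g 1 1) = ev 0}


lemma ev_ne_zero (n : ℤ) : ev n ≠ 0 := WithZero.coe_ne_zero
lemma ev_zero : ev 0 = 1 := by simp [ev]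
lemma ev_mul (m n : ℤ) : ev (m + n) = ev m * ev n := by
  rw [ev, ev, ev, ← WithZero.coe_mul, ← ofAdd_add]; ring_nf
lemma ev_le_ev {m n : ℤ} : ev m ≤ ev n ↔ n ≤ m := by
  rw [ev, ev, WithZero.coe_le_coe, Multiplicative.ofAdd_le]; omega
lemma ev_lt_ev {m n : ℤ} : ev m < ev n ↔ n < m := by
  rw [ev, ev, WithZero.coe_lt_coe, Multiplicative.ofAdd_lt]; omega
lemma ev_inj {m n : ℤ} : ev m = ev n ↔ m = n := by
  constructor
  · intro h; have h1 := ev_le_ev.mp h.le; have h2 := ev_le_ev.mp h.ge; omega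
  · rintro rfl; rfl
lemma ev_pow (m : ℤ) (k : ℕ) : (ev m) ^ k = ev (k * m) := by
  induction k with
  | zero => simp [ev_zero]
  | succ k ih => rw [pow_succ, ih, ← ev_mul, ev_inj]; push_cast; ring
lemma ev_cases {z : Zm0} (h : z ≠ 0) : ∃ k : ℤ, z = ev k := by
  induction z using WithZero.recZeroCoe with
  | zero => exact absurd rfl h
  | coe g => exact ⟨-Multiplicative.toAdd g, by simp [ev]⟩
lemma le_ev_succ_of_lt {z : Zm0} {m : ℤ} (h : z < ev m) : z ≤ ev (m + 1) := by
  rcases eq_or_ne z 0 with rfl | hz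
  · exact zero_le'
  · obtain ⟨k, rfl⟩ := ev_cases hz
    rw [ev_lt_ev] at h; rw [ev_le_ev]; omega

lemma ev_inv (k : ℤ) : (ev k)⁻¹ = ev (-k) := by
  rw [ev, ev, ← WithZero.coe_inv, ← ofAdd_neg]

lemma tmat_mul (a b c x1 y1 x2 y2 : F) :
    tmat a b c x1 y1 * tmat a b c x2 y2 =
      tmat a b c (x1 * x2 - a * c * (y1 * y2)) (x1 * y2 + x2 * y1 - b * (y1 * y2)) := by
  ext i j
  fin_cases i <;> fin_cases j <;>
    simp [tmat, Matrix.mul_apply, Fin.sum_univ_two] <;> ring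

lemma tmat_eq_iff {a b c x y x' y' : F} (hc : c ≠ 0) :
    tmat a b c x y = tmat a b c x' y' ↔ x = x' ∧ y = y' := by
  constructor
  · intro h
    have h00 := congrFun (congrFun h 0) 0
    have h01 := congrFun (congrFun h 0) 1
    simp [tmat] at h00 h01
    exact ⟨h00, by rcases h01 with h01 | h01; exact h01; exact absurd h01 hc⟩
  · rintro ⟨rfl, rfl⟩; rfl

lemma tmat_smul (a b c x y z : F) : z • tmat a b c x y = tmat a b c (z * x) (z * y) := by
  ext i j; fin_cases i <;> fin_cases j <;> simp [tmat] <;> ring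

lemma tmat_det (a b c x y : F) : (tmat a b c x y).det = x ^ 2 - b * x * y + a * c * y ^ 2 := by
  simp [tmat, Matrix.det_fin_two]; ring

lemma tmat00 (a b c x y : F) : tmat a b c x y 0 0 = x := by simp [tmat]
lemma tmat01 (a b c x y : F) : tmat a b c x y 0 1 = c * y := by simp [tmat]
lemma tmat10 (a b c x y : F) : tmat a b c x y 1 0 = -(a * y) := by simp [tmat]
lemma tmat11 (a b c x y : F) : tmat a b c x y 1 1 = x - b * y := by simp [tmat]

section Mem
variable (v : Valuation F Zm0) {a b c : F} {n C : ℕ}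

lemma vne_of_vz {x : F} (h : v x = ev 0) : x ≠ 0 := by
  intro h0; rw [h0, _root_.map_zero] at h; exact (ev_ne_zero 0) h.symm

lemma rel_of_mem (hc : v c = ev 0) (hn : 1 ≤ n) {x y x' y' : F}
    (hN : x ^ 2 - b * x * y + a * c * y ^ 2 ≠ 0)
    {u : Matrix (Fin 2) (Fin 2) F} (hu : u ∈ TSet a b c ∩ (ZF F * Kp v n C))
    (heq : tmat a b c x y = tmat a b c x' y' * u) :
    x' ^ 2 - b * x' * y' + a * c * y' ^ 2 ≠ 0 ∧
    v (x' * y - x * y') ≤ ev C * v (x * x' - b * (x * y') + a * c * (y * y')) := by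
  obtain ⟨⟨x₂, y₂, hN₂, rfl⟩, hzk⟩ := hu
  obtain ⟨zm, hzm, k, hk, hmul⟩ := Set.mem_mul.mp hzk
  obtain ⟨z, hz, rfl⟩ := hzm
  have hc0 : c ≠ 0 := vne_of_vz v hc
  -- recover k
  have hkeq : k = z⁻¹ • tmat a b c x₂ y₂ := by
    rw [← hmul, smul_mul_assoc, one_mul, smul_smul, inv_mul_cancel₀ hz, one_smul]
  have hk00 : k 0 0 = z⁻¹ * x₂ := by rw [hkeq]; simp [tmat]
  have hk01 : k 0 1 = z⁻¹ * (c * y₂) := by rw [hkeq]; simp [tmat]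
  obtain ⟨hK1, hK2, -, -⟩ := hk
  rw [hk00] at hK1; rw [hk01] at hK2
  -- v x₂ = v z
  have hvz : v z ≠ 0 := fun h => hz ((Valuation.zero_iff v).mp h)
  have hx₂z : v x₂ = v z := by
    have h1 : v (z⁻¹ * x₂ - 1) < v 1 := by
      refine lt_of_le_of_lt hK1 ?_
      rw [Valuation.map_one, ← ev_zero, ev_lt_ev]; omega
    have h2 : v (z⁻¹ * x₂) = 1 := by
      have h3 := Valuation.map_add_eq_of_lt_right v h1
      rwa [sub_add_cancel, Valuation.map_one] at h3
    rw [Valuation.map_mul, _root_.map_inv₀] at h2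
    exact ((inv_mul_eq_one₀ hvz).mp h2).symm
  -- v y₂ ≤ ev C * v z
  have hy₂z : v y₂ ≤ ev C * v z := by
    rw [Valuation.map_mul, Valuation.map_mul, _root_.map_inv₀, hc] at hK2
    rcases eq_or_ne (v y₂) 0 with h0 | h0
    · rw [h0]; exact zero_le'
    · obtain ⟨ky, hky⟩ := ev_cases h0
      obtain ⟨kz, hkz⟩ := ev_cases hvz
      rw [hky, hkz, ev_inv, ← ev_mul, ← ev_mul, ev_le_ev] at hK2
      rw [hky, hkz, ← ev_mul, ev_le_ev]
      omega
  -- matrix identities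
  rw [tmat_mul] at heq
  obtain ⟨hx, hy⟩ := (tmat_eq_iff hc0).mp heq
  have hNmul : x ^ 2 - b * x * y + a * c * y ^ 2 =
      (x' ^ 2 - b * x' * y' + a * c * y' ^ 2) * (x₂ ^ 2 - b * x₂ * y₂ + a * c * y₂ ^ 2) := by
    rw [hx, hy]; ring
  have hN'0 : x' ^ 2 - b * x' * y' + a * c * y' ^ 2 ≠ 0 := by
    intro h; exact hN (by rw [hNmul, h, zero_mul])
  refine ⟨hN'0, ?_⟩
  have e1 : x' * y - x * y' = (x' ^ 2 - b * x' * y' + a * c * y' ^ 2) * y₂ := by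
    rw [hx, hy]; ring
  have e2 : x * x' - b * (x * y') + a * c * (y * y') =
      (x' ^ 2 - b * x' * y' + a * c * y' ^ 2) * x₂ := by
    rw [hx, hy]; ring
  rw [e1, e2, Valuation.map_mul, Valuation.map_mul]
  calc v (x' ^ 2 - b * x' * y' + a * c * y' ^ 2) * v y₂
      ≤ v (x' ^ 2 - b * x' * y' + a * c * y' ^ 2) * (ev C * v z) := mul_le_mul_right hy₂z _
    _ = ev C * (v (x' ^ 2 - b * x' * y' + a * c * y' ^ 2) * v x₂) := by
        rw [hx₂z]; exact mul_left_comm _ _ _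


lemma mem_of_rel (hc : v c = ev 0) (hao : v a ≤ ev 0) (hbo : v b ≤ ev 0)
    (hn : 1 ≤ n) (hnC : n ≤ C) {x y x' y' : F}
    (hN : (x ^ 2 - b * x * y + a * c * y ^ 2) ≠ 0) (hN' : (x' ^ 2 - b * x' * y' + a * c * y' ^ 2) ≠ 0)
    (hrel : v (x' * y - x * y') ≤ ev C * v (x * x' - b * (x * y') + a * c * (y * y'))) :
    ∃ u ∈ TSet a b c ∩ (ZF F * Kp v n C), tmat a b c x y = tmat a b c x' y' * u := by
  have hc0 : c ≠ 0 := vne_of_vz v hc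
  have hXY : (x * x' - b * (x * y') + a * c * (y * y')) ^ 2 - b * (x * x' - b * (x * y') + a * c * (y * y')) * (x' * y - x * y') + a * c * (x' * y - x * y') ^ 2 = (x ^ 2 - b * x * y + a * c * y ^ 2) * (x' ^ 2 - b * x' * y' + a * c * y' ^ 2) := by ring
  have hX0 : (x * x' - b * (x * y') + a * c * (y * y')) ≠ 0 := by
    intro h
    rw [h, _root_.map_zero, mul_zero] at hrel
    have hY0 : (x' * y - x * y') = 0 := (Valuation.zero_iff v).mp (le_antisymm hrel zero_le')
    have h2 : (x ^ 2 - b * x * y + a * c * y ^ 2) * (x' ^ 2 - b * x' * y' + a * c * y' ^ 2) = 0 := by rw [← hXY, h, hY0]; ring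
    rcases mul_eq_zero.mp h2 with h3 | h3
    · exact hN h3
    · exact hN' h3
  have hvX : v (x * x' - b * (x * y') + a * c * (y * y')) ≠ 0 := fun h => hX0 ((Valuation.zero_iff v).mp h)
  have hw : v ((x' * y - x * y') / (x * x' - b * (x * y') + a * c * (y * y'))) ≤ ev C := by
    rw [_root_.map_div₀]
    rcases eq_or_ne (v (x' * y - x * y')) 0 with h0 | h0
    · rw [h0, zero_div]; exact zero_le'
    · obtain ⟨kY, hkY⟩ := ev_cases h0
      obtain ⟨kX, hkX⟩ := ev_cases hvX
      rw [hkY, hkX, ← ev_mul, ev_le_ev] at hrel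
      rw [hkY, hkX, div_eq_mul_inv, ev_inv, ← ev_mul, ev_le_ev]; omega
  have hC1 : (1:ℤ) ≤ C := by exact_mod_cast le_trans hn hnC
  refine ⟨tmat a b c ((x * x' - b * (x * y') + a * c * (y * y')) / (x' ^ 2 - b * x' * y' + a * c * y' ^ 2)) ((x' * y - x * y') / (x' ^ 2 - b * x' * y' + a * c * y' ^ 2)), ⟨⟨(x * x' - b * (x * y') + a * c * (y * y')) / (x' ^ 2 - b * x' * y' + a * c * y' ^ 2), (x' * y - x * y') / (x' ^ 2 - b * x' * y' + a * c * y' ^ 2), ?_, rfl⟩, ?_⟩, ?_⟩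
  · have e3 : ((x * x' - b * (x * y') + a * c * (y * y')) / (x' ^ 2 - b * x' * y' + a * c * y' ^ 2)) ^ 2 - b * ((x * x' - b * (x * y') + a * c * (y * y')) / (x' ^ 2 - b * x' * y' + a * c * y' ^ 2)) * ((x' * y - x * y') / (x' ^ 2 - b * x' * y' + a * c * y' ^ 2)) + a * c * ((x' * y - x * y') / (x' ^ 2 - b * x' * y' + a * c * y' ^ 2)) ^ 2
        = (x ^ 2 - b * x * y + a * c * y ^ 2) / (x' ^ 2 - b * x' * y' + a * c * y' ^ 2) := by
      set D := x' ^ 2 - b * x' * y' + a * c * y' ^ 2 with hD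
      field_simp
      rw [hD]; ring
    rw [e3]
    exact div_ne_zero hN hN'
  · have hprod : tmat a b c ((x * x' - b * (x * y') + a * c * (y * y')) / (x' ^ 2 - b * x' * y' + a * c * y' ^ 2)) ((x' * y - x * y') / (x' ^ 2 - b * x' * y' + a * c * y' ^ 2))
        = (((x * x' - b * (x * y') + a * c * (y * y')) / (x' ^ 2 - b * x' * y' + a * c * y' ^ 2)) • (1 : Matrix (Fin 2) (Fin 2) F)) * tmat a b c 1 ((x' * y - x * y') / (x * x' - b * (x * y') + a * c * (y * y'))) := by
      have harg : (x * x' - b * (x * y') + a * c * (y * y')) / (x' ^ 2 - b * x' * y' + a * c * y' ^ 2) * ((x' * y - x * y') / (x * x' - b * (x * y') + a * c * (y * y')))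
          = (x' * y - x * y') / (x' ^ 2 - b * x' * y' + a * c * y' ^ 2) := by
        set D := x' ^ 2 - b * x' * y' + a * c * y' ^ 2 with hD; set X := x * x' - b * (x * y') + a * c * (y * y') with hX; field_simp
      rw [smul_mul_assoc, one_mul, tmat_smul, mul_one, harg]
    rw [hprod]
    refine Set.mul_mem_mul ⟨(x * x' - b * (x * y') + a * c * (y * y')) / (x' ^ 2 - b * x' * y' + a * c * y' ^ 2), div_ne_zero hX0 hN', rfl⟩ ?_
    refine ⟨?_, ?_, ?_, ?_⟩
    · rw [tmat00, sub_self, _root_.map_zero]; exact zero_le'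
    · rw [tmat01, Valuation.map_mul, hc, ev_zero, one_mul]; exact hw
    · rw [tmat10, Valuation.map_neg, Valuation.map_mul]
      calc v a * v ((x' * y - x * y') / (x * x' - b * (x * y') + a * c * (y * y'))) ≤ ev 0 * ev C := mul_le_mul' hao hw
        _ ≤ ev ((n:ℤ) - C) := by rw [← ev_mul, ev_le_ev]; omega
    · rw [tmat11]
      have hlt : v (b * ((x' * y - x * y') / (x * x' - b * (x * y') + a * c * (y * y')))) < 1 := by
        calc v (b * ((x' * y - x * y') / (x * x' - b * (x * y') + a * c * (y * y')))) ≤ ev 0 * ev C := by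
              rw [Valuation.map_mul]; exact mul_le_mul' hbo hw
          _ < 1 := by rw [← ev_mul, ← ev_zero, ev_lt_ev]; omega
      rw [Valuation.map_one_sub_of_lt v hlt, ev_zero]
  · rw [tmat_mul, tmat_eq_iff hc0]
    constructor
    · set D := x' ^ 2 - b * x' * y' + a * c * y' ^ 2 with hD
      field_simp
      rw [hD]; ring
    · set D := x' ^ 2 - b * x' * y' + a * c * y' ^ 2 with hD
      field_simp
      rw [hD]; ring

end Mem

section KeyL
variable {F L : Type*} [Field F] [Field L] [Algebra F L]
variable (v : Valuation F Zm0) (vL : Valuation L Zm0)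

lemma vsq_cases (halg : ∀ x : F, vL (algebraMap F L x) = (v x) ^ 2) (x : F) :
    vL (algebraMap F L x) = 0 ∨ ∃ k : ℤ, v x = ev k ∧ vL (algebraMap F L x) = ev (2 * k) := by
  rcases eq_or_ne (v x) 0 with h0 | h0
  · left; rw [halg, h0]; simp
  · obtain ⟨k, hk⟩ := ev_cases h0
    right; exact ⟨k, hk, by rw [halg, hk, ev_pow]; norm_num⟩

lemma key_lemma
    (β : L)
    (hbasis : ∀ z : L, vL z ≤ ev 0 ↔
      ∃ s t : F, v s ≤ ev 0 ∧ v t ≤ ev 0 ∧ z = algebraMap F L s + algebraMap F L t * β)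
    (halg : ∀ x : F, vL (algebraMap F L x) = (v x) ^ 2)
    (ϖL : L) (hϖL : vL ϖL = ev 1)
    (θ : L) (k : ℤ) (hk : 2 ≤ k) (hvθ : vL θ = ev k)
    (f : F) (hfo : v f ≤ ev 0)
    (hform : β = algebraMap F L f + θ ∨ β = algebraMap F L f - θ) : False := by
  obtain ⟨s, t, hso, hto, hzeq⟩ := (hbasis ϖL).mp (by rw [hϖL]; exact ev_le_ev.mpr (by omega))
  have hθ0 : θ ≠ 0 := fun h => (ev_ne_zero k) (by rw [← hvθ, h, _root_.map_zero])
  -- ϖL = P + Q' with vL Q' = vL (A t * θ)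
  set A := algebraMap F L with hA
  obtain ⟨Q', hQ'v, hϖeq⟩ : ∃ Q', vL Q' = vL (A t * θ) ∧ ϖL = A (s + t * f) + Q' := by
    rcases hform with hf | hf
    · exact ⟨A t * θ, rfl, by rw [hzeq, hf, _root_.map_add, _root_.map_mul]; ring⟩
    · exact ⟨-(A t * θ), by rw [Valuation.map_neg], by rw [hzeq, hf, _root_.map_add, _root_.map_mul]; ring⟩
  have hstf : v (s + t * f) ≤ ev 0 := by
    refine le_trans (v.map_add _ _) (max_le hso ?_)
    rw [Valuation.map_mul]
    calc v t * v f ≤ ev 0 * ev 0 := mul_le_mul' hto hfo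
      _ = ev 0 := by rw [← ev_mul]; norm_num
  -- case on v t
  rcases eq_or_ne (v t) 0 with ht0 | ht0
  · -- t = 0
    have : t = 0 := (Valuation.zero_iff v).mp ht0
    subst this
    rw [_root_.map_zero, zero_mul, add_zero] at hzeq
    rw [hzeq, halg] at hϖL
    rcases eq_or_ne (v s) 0 with h0 | h0
    · rw [h0] at hϖL; simp at hϖL; exact (ev_ne_zero 1) hϖL.symm
    · obtain ⟨j, hj⟩ := ev_cases h0
      rw [hj, ev_pow, ev_inj] at hϖL; omega
  · obtain ⟨kt, hkt⟩ := ev_cases ht0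
    have hkt0 : 0 ≤ kt := by rw [hkt] at hto; exact ev_le_ev.mp hto
    have hvQ : vL Q' = ev (2 * kt + k) := by
      rw [hQ'v, Valuation.map_mul, halg, hvθ, hkt, ev_pow, ← ev_mul]; norm_num
    rcases eq_or_ne (v (s + t * f)) 0 with hP0 | hP0
    · -- P = 0
      have hP0' : s + t * f = 0 := (Valuation.zero_iff v).mp hP0
      rw [hP0', _root_.map_zero, zero_add] at hϖeq
      rw [hϖeq, hvQ, ev_inj] at hϖL
      omega
    · obtain ⟨kp, hkp⟩ := ev_cases hP0
      have hkp0 : 0 ≤ kp := by rw [hkp] at hstf; exact ev_le_ev.mp hstf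
      have hvP : vL (A (s + t * f)) = ev (2 * kp) := by
        rw [halg, hkp, ev_pow]; norm_num
      rcases eq_or_ne (2 * kp) (2 * kt + k) with heq | hne
      · have hle : vL ϖL ≤ ev (2 * kp) := by
          rw [hϖeq]
          refine le_trans (vL.map_add _ _) (max_le (le_of_eq hvP) ?_)
          rw [hvQ, ← heq]
        rw [hϖL, ev_le_ev] at hle
        omega
      · have hd : vL (A (s + t * f)) ≠ vL Q' := by
          rw [hvP, hvQ]; exact fun h => hne (ev_inj.mp h)
        have := Valuation.map_add_of_distinct_val vL hd
        rw [← hϖeq, hϖL, hvP, hvQ] at this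
        rcases max_cases (ev (2 * kp)) (ev (2 * kt + k)) with ⟨h1, -⟩ | ⟨h1, -⟩ <;>
          rw [h1] at this <;> [skip; skip] <;>
          first
          | (have := ev_inj.mp this; omega)
          | (have := ev_inj.mp this; omega)


lemma ramified_key [CharZero F]
    (a b c : F)
    (hao : v a ≤ ev 0) (hbo : v b ≤ ev 0) (hc : v c = ev 0)
    (hnonsq : ∀ r : F, r ^ 2 ≠ b ^ 2 - 4 * (a * c))
    (sqd : L) (hsqd : sqd ^ 2 = algebraMap F L (b ^ 2 - 4 * (a * c)))
    (β : L) (hβ : β = (algebraMap F L b + sqd) / (2 * algebraMap F L c))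
    (hbasis : ∀ z : L, vL z ≤ ev 0 ↔
      ∃ s t : F, v s ≤ ev 0 ∧ v t ≤ ev 0 ∧ z = algebraMap F L s + algebraMap F L t * β)
    (halg : ∀ x : F, vL (algebraMap F L x) = (v x) ^ 2)
    (ϖL : L) (hϖL : vL ϖL = ev 1)
    (hva : v a = ev 0)
    (u₀ : F) (hu₀o : v u₀ ≤ ev 0) (hu₀ : v (c * u₀ ^ 2 + b * u₀ + a) ≤ ev 1) :
    v (c * u₀ ^ 2 + b * u₀ + a) = ev 1 ∧ v (2 * c * u₀ + b) ≤ ev 1 := by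
  set A := algebraMap F L with hA
  have hc0 : c ≠ 0 := fun h => (ev_ne_zero 0) (by rw [← hc, h, _root_.map_zero])
  have h20 : (2 : L) ≠ 0 := by
    have h2F : (2 : F) ≠ 0 := two_ne_zero
    have : (2 : L) = A 2 := by rw [_root_.map_ofNat]
    rw [this]
    exact fun h => h2F ((_root_.map_eq_zero A).mp h)
  have hAc0 : A c ≠ 0 := fun h => hc0 ((_root_.map_eq_zero A).mp h)
  have hsqd' : sqd ^ 2 = (A b) ^ 2 - 4 * (A a * A c) := by
    rw [hsqd, _root_.map_sub, _root_.map_pow, _root_.map_mul, _root_.map_mul, _root_.map_ofNat]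
  have h2Ac0 : 2 * A c ≠ 0 := mul_ne_zero h20 hAc0
  have hβmul : 2 * A c * β = A b + sqd := by
    rw [hβ, mul_div_cancel₀ _ h2Ac0]
  have hβquad : A c * β ^ 2 - A b * β + A a = 0 := by
    have h4T : (4 * A c) * (A c * β ^ 2 - A b * β + A a) = 0 := by
      linear_combination (2 * A c * β - A b + sqd) * hβmul + hsqd'
    rcases mul_eq_zero.mp h4T with h | h
    · exact absurd h (by
        intro h'
        rcases mul_eq_zero.mp h' with h'' | h''
        · norm_num at h''
          exact h20 (by rw [show (4:L) = 2 * 2 by norm_num] at h''; rcases mul_eq_zero.mp h'' with h3 | h3 <;> exact h3)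
        · exact hAc0 h'')
    · exact h
  have hsqd2 : sqd = 2 * A c * β - A b := by
    rw [hβ]; field_simp; ring
  set θ : L := A u₀ + β with hθdef
  set θ₂ : L := A (c * u₀ + b) - A c * β with hθ₂def
  have hprodθ : θ * θ₂ = A (c * u₀ ^ 2 + b * u₀ + a) := by
    rw [hθdef, hθ₂def]
    rw [show A (c * u₀ ^ 2 + b * u₀ + a) = A c * A u₀ ^ 2 + A b * A u₀ + A a by
      rw [_root_.map_add, _root_.map_add, _root_.map_mul, _root_.map_mul, _root_.map_pow]]
    rw [show A (c * u₀ + b) = A c * A u₀ + A b by rw [_root_.map_add, _root_.map_mul]]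
    linear_combination -hβquad
  have hsumθ : A c * θ + θ₂ = A (2 * c * u₀ + b) := by
    rw [hθdef, hθ₂def]
    rw [show A (2 * c * u₀ + b) = 2 * A c * A u₀ + A b by
      rw [_root_.map_add, _root_.map_mul, _root_.map_mul, _root_.map_ofNat]]
    rw [show A (c * u₀ + b) = A c * A u₀ + A b by rw [_root_.map_add, _root_.map_mul]]
    ring
  have hsq_contra : ∀ r : F, sqd ≠ A r := by
    intro r hr
    apply hnonsq r
    have : A (r ^ 2) = A (b ^ 2 - 4 * (a * c)) := by
      rw [_root_.map_pow, ← hr, hsqd]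
    exact (algebraMap F L).injective this
  have hθ0 : θ ≠ 0 := by
    intro h
    apply hsq_contra (-(2 * c * u₀ + b))
    have hβval : β = -A u₀ := by rw [hθdef] at h; linear_combination h
    rw [hsqd2, hβval]
    rw [show A (-(2 * c * u₀ + b)) = -(2 * A c * A u₀ + A b) by
      rw [_root_.map_neg, _root_.map_add, _root_.map_mul, _root_.map_mul, _root_.map_ofNat]]
    ring
  have hθ₂0 : θ₂ ≠ 0 := by
    intro h
    apply hsq_contra (2 * c * u₀ + b)
    have hβval : A c * β = A (c * u₀ + b) := by rw [hθ₂def] at h; linear_combination -h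
    have hβval' : A c * β = A c * A u₀ + A b := by rw [hβval, _root_.map_add, _root_.map_mul]
    rw [hsqd2, show A (2 * c * u₀ + b) = 2 * (A c * A u₀) + A b by
      rw [_root_.map_add, _root_.map_mul, _root_.map_mul, _root_.map_ofNat]; ring]
    linear_combination 2 * hβval'
  -- β is integral
  have hβo : vL β ≤ ev 0 := by
    rw [hbasis]
    exact ⟨0, 1, by rw [_root_.map_zero]; exact zero_le', by rw [Valuation.map_one, ev_zero],
      by rw [_root_.map_zero, _root_.map_one]; ring⟩
  have ho_of : ∀ x : F, v x ≤ ev 0 → vL (A x) ≤ ev 0 := by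
    intro x hx
    rw [halg]
    calc (v x) ^ 2 ≤ (ev 0) ^ 2 := pow_le_pow_left' hx 2
      _ = ev 0 := by rw [ev_pow]; norm_num
  have hθint : vL θ ≤ ev 0 := by
    rw [hθdef]
    exact le_trans (vL.map_add _ _) (max_le (ho_of u₀ hu₀o) hβo)
  have hθ₂int : vL θ₂ ≤ ev 0 := by
    rw [hθ₂def]
    refine le_trans (vL.map_sub _ _) (max_le (ho_of _ ?_) ?_)
    · refine le_trans (v.map_add _ _) (max_le ?_ hbo)
      rw [Valuation.map_mul]
      calc v c * v u₀ ≤ ev 0 * ev 0 := mul_le_mul' hc.le hu₀o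
        _ = ev 0 := by rw [← ev_mul]; norm_num
    · rw [Valuation.map_mul, halg, hc, ev_pow]
      rw [show ((2:ℕ) * (0:ℤ)) = 0 by norm_num, ev_zero, one_mul]
      exact hβo
  obtain ⟨kθ, hkθ⟩ := ev_cases (fun h => hθ0 ((Valuation.zero_iff vL).mp h) : vL θ ≠ 0)
  obtain ⟨kθ₂, hkθ₂⟩ := ev_cases (fun h => hθ₂0 ((Valuation.zero_iff vL).mp h) : vL θ₂ ≠ 0)
  have hkθ0 : 0 ≤ kθ := by rw [hkθ] at hθint; exact ev_le_ev.mp hθint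
  have hkθ₂0 : 0 ≤ kθ₂ := by rw [hkθ₂] at hθ₂int; exact ev_le_ev.mp hθ₂int
  -- E ≠ 0 and its valuation
  have hE0 : c * u₀ ^ 2 + b * u₀ + a ≠ 0 := by
    intro h
    have := hprodθ
    rw [h, _root_.map_zero] at this
    rcases mul_eq_zero.mp this with h' | h'
    · exact hθ0 h'
    · exact hθ₂0 h'
  obtain ⟨e0, he0⟩ := ev_cases (fun h => hE0 ((Valuation.zero_iff v).mp h) : v _ ≠ 0)
  have he01 : 1 ≤ e0 := by rw [he0] at hu₀; exact ev_le_ev.mp hu₀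
  have hsum_val : kθ + kθ₂ = 2 * e0 := by
    have : vL (θ * θ₂) = ev (2 * e0) := by
      rw [hprodθ, halg, he0, ev_pow]; norm_num
    rw [Valuation.map_mul, hkθ, hkθ₂, ← ev_mul, ev_inj] at this
    omega
  -- key_lemma rules out kθ ≥ 2 and kθ₂ ≥ 2
  have hkθle : kθ ≤ 1 := by
    by_contra hgt
    refine key_lemma v vL β hbasis halg ϖL hϖL θ kθ (by omega) hkθ (-u₀) ?_ (Or.inl ?_)
    · rw [Valuation.map_neg]; exact hu₀o
    · rw [hθdef, _root_.map_neg]; ring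
  have hkθ₂le : kθ₂ ≤ 1 := by
    by_contra hgt
    refine key_lemma v vL β hbasis halg ϖL hϖL (A c⁻¹ * θ₂) kθ₂ (by omega) ?_
      ((c * u₀ + b) / c) ?_ (Or.inr ?_)
    · rw [Valuation.map_mul, halg, _root_.map_inv₀, hc, ev_inv, ev_pow, hkθ₂]
      rw [show ((2:ℕ) * -(0:ℤ)) = 0 by norm_num, ev_zero, one_mul]
    · rw [_root_.map_div₀, hc, ev_zero, div_one]
      refine le_trans (v.map_add _ _) (max_le ?_ hbo)
      rw [Valuation.map_mul]
      calc v c * v u₀ ≤ ev 0 * ev 0 := mul_le_mul' hc.le hu₀o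
        _ = ev 0 := by rw [← ev_mul]; norm_num
    · rw [hθ₂def]
      rw [show A ((c * u₀ + b) / c) = A (c * u₀ + b) / A c by rw [_root_.map_div₀]]
      rw [_root_.map_inv₀]; field_simp; ring
  have hkθ1 : kθ = 1 ∧ kθ₂ = 1 ∧ e0 = 1 := by omega
  constructor
  · rw [he0, hkθ1.2.2]
  · -- v (2cu₀ + b) ≤ ev 1
    have hvsum : vL (A (2 * c * u₀ + b)) ≤ ev 1 := by
      rw [← hsumθ]
      refine le_trans (vL.map_add _ _) (max_le ?_ ?_)
      · rw [Valuation.map_mul, halg, hc, ev_pow, hkθ, hkθ1.1]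
        rw [show ((2:ℕ) * (0:ℤ)) = 0 by norm_num, ev_zero, one_mul]
      · rw [hkθ₂, hkθ1.2.1]
    rcases eq_or_ne (v (2 * c * u₀ + b)) 0 with h0 | h0
    · rw [h0]; exact zero_le'
    · obtain ⟨kB, hkB⟩ := ev_cases h0
      rw [halg, hkB, ev_pow, ev_le_ev] at hvsum
      rw [hkB, ev_le_ev]
      omega

end KeyL

section Helpers
variable {F : Type*} [Field F] (v : Valuation F Zm0) {a b c u₀ u₀' : F}

-- multiply two o-elements
lemma vmul_le_ev {x y : F} {m k : ℤ} (hx : v x ≤ ev m) (hy : v y ≤ ev k) :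
    v (x * y) ≤ ev (m + k) := by
  rw [Valuation.map_mul, ev_mul]; exact mul_le_mul' hx hy

lemma cancel_scale {z A B : Zm0} (hz : z ≠ 0) (m : ℤ) :
    z * A ≤ ev m * (z * B) ↔ A ≤ ev m * B := by
  obtain ⟨kz, rfl⟩ := ev_cases hz
  rcases eq_or_ne A 0 with rfl | hA
  · simp
  · obtain ⟨kA, rfl⟩ := ev_cases hA
    rcases eq_or_ne B 0 with rfl | hB
    · constructor
      · intro h
        exfalso
        rw [mul_zero, mul_zero, ← ev_mul] at h
        exact (ev_ne_zero _) (le_antisymm h zero_le')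
      · intro h
        exfalso
        rw [mul_zero] at h
        exact (ev_ne_zero _) (le_antisymm h zero_le')
    · obtain ⟨kB, rfl⟩ := ev_cases hB
      rw [← ev_mul, ← ev_mul, ← ev_mul, ← ev_mul, ev_le_ev, ev_le_ev]
      omega

-- the master identity
lemma master_id (ha0 : a ≠ 0) (hu : u₀' = -u₀ / a) (r w : F) :
    a * (1 - b * r + a * c * (w * r)) =
      c * a ^ 2 * (r - u₀') ^ 2 - (2 * c * u₀ + b) * (a * (r - u₀')) +
        (c * u₀ ^ 2 + b * u₀ + a) + a ^ 2 * c * (r * (w - r)) := by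
  rw [hu]; field_simp; ring

variable (hva : v a = ev 0) (hbo : v b ≤ ev 0) (hc : v c = ev 0)
  (hB : v (2 * c * u₀ + b) ≤ ev 1) (hE1 : v (c * u₀ ^ 2 + b * u₀ + a) = ev 1)
  (hu₀o : v u₀ ≤ ev 0) (ha0 : a ≠ 0) (hu : u₀' = -u₀ / a) (hu₀'o : v u₀' ≤ ev 0)

include hva hbo hc hB hE1 hu₀o ha0 hu hu₀'o in
lemma helper1 {r w : F} (hr : v r ≤ ev 0) (hru : v (r - u₀') = ev 0)
    (hwr : v (w - r) ≤ ev 1) : v (1 - b * r + a * c * (w * r)) = ev 0 := by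
  have hva' : v (a * (1 - b * r + a * c * (w * r))) = v (1 - b * r + a * c * (w * r)) := by
    rw [Valuation.map_mul, hva, ev_zero, one_mul]
  rw [← hva', master_id ha0 hu]
  have h1 : v (c * a ^ 2 * (r - u₀') ^ 2) = ev 0 := by
    rw [Valuation.map_mul, Valuation.map_mul, _root_.map_pow, _root_.map_pow, hva, hc, hru, ev_zero]
    norm_num
  have h2 : v (-((2 * c * u₀ + b) * (a * (r - u₀'))) + (c * u₀ ^ 2 + b * u₀ + a)
      + a ^ 2 * c * (r * (w - r))) ≤ ev 1 := by
    refine le_trans (v.map_add _ _) (max_le (le_trans (v.map_add _ _) (max_le ?_ ?_)) ?_)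
    · rw [Valuation.map_neg]
      calc v ((2 * c * u₀ + b) * (a * (r - u₀'))) ≤ ev 1 * ev 0 := by
            rw [Valuation.map_mul]
            refine mul_le_mul' hB ?_
            rw [Valuation.map_mul, hva, hru, ev_zero, one_mul]
      _ = ev 1 := by rw [← ev_mul]; norm_num
    · rw [hE1]
    · calc v (a ^ 2 * c * (r * (w - r))) ≤ (ev 0 * ev 0) * (ev 0 * ev 1) := by
            rw [Valuation.map_mul, Valuation.map_mul, Valuation.map_mul, _root_.map_pow, hva, hc]
            rw [show (ev 0) ^ 2 = ev 0 * ev 0 by rw [sq]]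
            exact mul_le_mul' (mul_le_mul' le_rfl le_rfl) (mul_le_mul' hr hwr)
      _ = ev 1 := by rw [← ev_mul, ← ev_mul, ← ev_mul]; norm_num
  have hlt : v (-((2 * c * u₀ + b) * (a * (r - u₀'))) + (c * u₀ ^ 2 + b * u₀ + a)
      + a ^ 2 * c * (r * (w - r))) < v (c * a ^ 2 * (r - u₀') ^ 2) := by
    rw [h1]; exact lt_of_le_of_lt h2 (ev_lt_ev.mpr (by omega))
  calc v (c * a ^ 2 * (r - u₀') ^ 2 - (2 * c * u₀ + b) * (a * (r - u₀'))
        + (c * u₀ ^ 2 + b * u₀ + a) + a ^ 2 * c * (r * (w - r)))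
      = v (c * a ^ 2 * (r - u₀') ^ 2 + (-((2 * c * u₀ + b) * (a * (r - u₀')))
        + (c * u₀ ^ 2 + b * u₀ + a) + a ^ 2 * c * (r * (w - r)))) := by ring_nf
    _ = v (c * a ^ 2 * (r - u₀') ^ 2) := Valuation.map_add_eq_of_lt_left v hlt
    _ = ev 0 := h1

lemma ev0_of {z : Zm0} (h : z ≤ ev 0) (h2 : ¬ z ≤ ev 1) : z = ev 0 := by
  rcases h.lt_or_eq with hlt | heq
  · exact absurd (by simpa using le_ev_succ_of_lt hlt) h2
  · exact heq

lemma vo_add {x y : F} {m : ℤ} (hx : v x ≤ ev m) (hy : v y ≤ ev m) : v (x + y) ≤ ev m :=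
  le_trans (v.map_add _ _) (max_le hx hy)

lemma vo_sub {x y : F} {m : ℤ} (hx : v x ≤ ev m) (hy : v y ≤ ev m) : v (x - y) ≤ ev m :=
  v.map_sub_le hx hy

lemma vone : v (1 : F) = ev 0 := by rw [Valuation.map_one, ev_zero]

include hva hc in
lemma term1_bound {r s : F} (hr' : v (r - u₀') ≤ ev 1) (hs' : v (s - u₀') ≤ ev 1) :
    v (c * a ^ 2 * ((r - u₀') * (s - u₀'))) ≤ ev 2 := by
  have e : c * a ^ 2 * ((r - u₀') * (s - u₀')) = (c * (a * a)) * ((r - u₀') * (s - u₀')) := by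
    ring
  rw [e]
  refine le_trans (vmul_le_ev v (vmul_le_ev v hc.le (vmul_le_ev v hva.le hva.le))
    (vmul_le_ev v hr' hs')) ?_
  rw [ev_le_ev]; norm_num

include hva hB in
lemma term2_bound {r : F} (hr' : v (r - u₀') ≤ ev 1) :
    v ((2 * c * u₀ + b) * (a * (r - u₀'))) ≤ ev 2 := by
  refine le_trans (vmul_le_ev v hB (vmul_le_ev v hva.le hr')) ?_
  rw [ev_le_ev]; norm_num

include hva hc in
lemma term4_bound {r w : F} {m : ℤ} (hr : v r ≤ ev 0) (hwr : v (w - r) ≤ ev m) :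
    v (a ^ 2 * c * (r * (w - r))) ≤ ev m := by
  have e : a ^ 2 * c * (r * (w - r)) = ((a * a) * c) * (r * (w - r)) := by ring
  rw [e]
  refine le_trans (vmul_le_ev v (vmul_le_ev v (vmul_le_ev v hva.le hva.le) hc.le)
    (vmul_le_ev v hr hwr)) ?_
  rw [ev_le_ev]; omega

include hva hbo hc hB hE1 hu₀o ha0 hu hu₀'o in
lemma helper2 {r w : F} (hr' : v (r - u₀') ≤ ev 1) (hr : v r ≤ ev 0)
    (hwr : v (w - r) ≤ ev 2) : v (1 - b * r + a * c * (w * r)) = ev 1 := by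
  have hva' : v (a * (1 - b * r + a * c * (w * r))) = v (1 - b * r + a * c * (w * r)) := by
    rw [Valuation.map_mul, hva, ev_zero, one_mul]
  rw [← hva', master_id ha0 hu]
  have hsq : c * a ^ 2 * (r - u₀') ^ 2 = c * a ^ 2 * ((r - u₀') * (r - u₀')) := by ring
  have h2 : v (c * a ^ 2 * ((r - u₀') * (r - u₀')) - (2 * c * u₀ + b) * (a * (r - u₀'))
      + a ^ 2 * c * (r * (w - r))) ≤ ev 2 := by
    refine vo_add v (vo_sub v ?_ ?_) ?_
    · exact term1_bound v hva hc hr' hr'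
    · exact term2_bound v hva hB hr'
    · exact term4_bound v hva hc hr hwr
  have hlt : v (c * a ^ 2 * ((r - u₀') * (r - u₀')) - (2 * c * u₀ + b) * (a * (r - u₀'))
      + a ^ 2 * c * (r * (w - r))) < v (c * u₀ ^ 2 + b * u₀ + a) := by
    rw [hE1]; exact lt_of_le_of_lt h2 (ev_lt_ev.mpr (by omega))
  calc v (c * a ^ 2 * (r - u₀') ^ 2 - (2 * c * u₀ + b) * (a * (r - u₀'))
        + (c * u₀ ^ 2 + b * u₀ + a) + a ^ 2 * c * (r * (w - r)))
      = v ((c * u₀ ^ 2 + b * u₀ + a) + (c * a ^ 2 * ((r - u₀') * (r - u₀'))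
        - (2 * c * u₀ + b) * (a * (r - u₀')) + a ^ 2 * c * (r * (w - r)))) := by ring_nf
    _ = v (c * u₀ ^ 2 + b * u₀ + a) := Valuation.map_add_eq_of_lt_left v hlt
    _ = ev 1 := hE1

include hva hbo hc hB hE1 hu₀o ha0 hu hu₀'o in
lemma helper2' {r w : F} (hr' : v (r - u₀') ≤ ev 1) (hr : v r ≤ ev 0)
    (hwr : v (w - r) ≤ ev 1) : v (1 - b * r + a * c * (w * r)) ≤ ev 1 := by
  have hva' : v (a * (1 - b * r + a * c * (w * r))) = v (1 - b * r + a * c * (w * r)) := by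
    rw [Valuation.map_mul, hva, ev_zero, one_mul]
  rw [← hva', master_id ha0 hu]
  have hsq : c * a ^ 2 * (r - u₀') ^ 2 = c * a ^ 2 * ((r - u₀') * (r - u₀')) := by ring
  refine vo_add v (vo_add v (vo_sub v ?_ ?_) ?_) ?_
  · rw [hsq]
    exact le_trans (term1_bound v hva hc hr' hr') (by rw [ev_le_ev]; omega)
  · exact le_trans (term2_bound v hva hB hr') (by rw [ev_le_ev]; omega)
  · rw [hE1]
  · exact term4_bound v hva hc hr hwr

include hbo in
lemma helper3 {r w : F} (hr : v r ≤ ev 0) (hw : v w ≤ ev 0) (hao' : v a ≤ ev 0)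
    (hc' : v c ≤ ev 0) : v (1 - b * r + a * c * (w * r)) ≤ ev 0 := by
  refine vo_add v (vo_sub v ?_ ?_) ?_
  · rw [vone]
  · exact le_trans (vmul_le_ev v hbo hr) (by rw [ev_le_ev]; omega)
  · exact le_trans (vmul_le_ev v (vmul_le_ev v hao' hc') (vmul_le_ev v hw hr))
      (by rw [ev_le_ev]; omega)

include hva hbo hc in
lemma helper5 {p q : F} (hp : v p ≤ ev 1) (hq : v q ≤ ev 1) :
    v (p * q - b * p + a * c) = ev 0 := by
  have h1 : v (a * c) = ev 0 := by
    rw [Valuation.map_mul, hva, hc, ← ev_mul]; norm_num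
  have h2 : v (p * q - b * p) ≤ ev 1 := by
    refine vo_sub v ?_ ?_
    · exact le_trans (vmul_le_ev v hp hq) (by rw [ev_le_ev]; omega)
    · exact le_trans (vmul_le_ev v hbo hp) (by rw [ev_le_ev]; omega)
  have hlt : v (p * q - b * p) < v (a * c) := by
    rw [h1]; exact lt_of_le_of_lt h2 (ev_lt_ev.mpr (by omega))
  rw [Valuation.map_add_eq_of_lt_right v hlt, h1]
end Helpers

/-- if L/F is ramified and v(a) = 0, with u₀ a root mod 𝔭 of cu² + bu + a and
u₀' = −u₀/a, then the elements t(1,y) for y running over representatives of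
{ y ∈ 𝔬/𝔭^C : y − u₀' ∉ 𝔭 }, together with t(1, u₀' + y) for y over representatives of
𝔭/𝔭^{C+1}, together with t(x,1) for x over representatives of 𝔭/𝔭^C, form a complete
irredundant set of coset representatives for T(F) ∩ Z(F)·K' in T(F). -/
theorem stmt16
    {L : Type*} [Field L] [CharZero F] [Algebra F L]
    (v : Valuation F Zm0) (vL : Valuation L Zm0)
    (ϖ : F) (hϖ : v ϖ = ev 1)
    (ϖL : L) (hϖL : vL ϖL = ev 1)
    (a b c : F)
    (hao : v a ≤ ev 0) (hbo : v b ≤ ev 0) (hc : v c = ev 0)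
    (hd0 : b ^ 2 - 4 * (a * c) ≠ 0)
    (hnonsq : ∀ r : F, r ^ 2 ≠ b ^ 2 - 4 * (a * c))
    (sqd : L) (hsqd : sqd ^ 2 = algebraMap F L (b ^ 2 - 4 * (a * c)))
    (hspan : ∀ z : L, ∃ s t : F, z = algebraMap F L s + algebraMap F L t * sqd)
    (β : L) (hβ : β = (algebraMap F L b + sqd) / (2 * algebraMap F L c))
    -- {1, β} is an 𝔬-basis of 𝔬_L :
    (hbasis : ∀ z : L, vL z ≤ ev 0 ↔
      ∃ s t : F, v s ≤ ev 0 ∧ v t ≤ ev 0 ∧ z = algebraMap F L s + algebraMap F L t * β)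
    -- v_L restricted to F is e·v for the ramification index e ≥ 1 :
    (hcomp : ∃ e : ℕ, 0 < e ∧ ∀ x : F, vL (algebraMap F L x) = (v x) ^ e)
    (n C : ℕ) (hn : 1 ≤ n) (hnC : n ≤ C)
    -- L/F is ramified and v(a) = 0 :
    (hram : vL (algebraMap F L ϖ) = ev 2) (hva : v a = ev 0)
    -- u₀ ∈ 𝔬 with c·u₀² + b·u₀ + a ∈ 𝔭, and u₀' = −u₀/a :
    (u₀ : F) (hu₀o : v u₀ ≤ ev 0) (hu₀ : v (c * u₀ ^ 2 + b * u₀ + a) ≤ ev 1)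
    (u₀' : F) (hu₀' : u₀' = -u₀ / a)
    -- Y₁ is a set of representatives of { y ∈ 𝔬/𝔭^C : y − u₀' ∉ 𝔭 } :
    (Y₁ : Finset F) (hY₁ : ∀ y ∈ Y₁, v y ≤ ev 0 ∧ ¬ v (y - u₀') ≤ ev 1)
    (hY₁rep : ∀ y : F, v y ≤ ev 0 → ¬ v (y - u₀') ≤ ev 1 → ∃! r, r ∈ Y₁ ∧ v (y - r) ≤ ev C)
    -- Y₂ is a set of representatives of 𝔭/𝔭^{C+1} :
    (Y₂ : Finset F) (hY₂ : ∀ y ∈ Y₂, v y ≤ ev 1)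
    (hY₂rep : ∀ y : F, v y ≤ ev 1 → ∃! r, r ∈ Y₂ ∧ v (y - r) ≤ ev ((C : ℤ) + 1))
    -- Y₃ is a set of representatives of 𝔭/𝔭^C :
    (Y₃ : Finset F) (hY₃ : ∀ x ∈ Y₃, v x ≤ ev 1)
    (hY₃rep : ∀ x : F, v x ≤ ev 1 → ∃! r, r ∈ Y₃ ∧ v (x - r) ≤ ev C) :
    ∀ g ∈ TSet a b c, ∃! m : Matrix (Fin 2) (Fin 2) F,
      ((∃ y ∈ Y₁, m = tmat a b c 1 y)
        ∨ (∃ y ∈ Y₂, m = tmat a b c 1 (u₀' + y))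
        ∨ (∃ x ∈ Y₃, m = tmat a b c x 1))
      ∧ ∃ u ∈ TSet a b c ∩ (ZF F * Kp v n C), g = m * u := by
  -- basic nonvanishing
  have hc0 : c ≠ 0 := fun h => (ev_ne_zero 0) (by rw [← hc, h, _root_.map_zero])
  have ha0 : a ≠ 0 := fun h => (ev_ne_zero 0) (by rw [← hva, h, _root_.map_zero])
  -- ramification index is 2
  obtain ⟨e, hepos, halg'⟩ := hcomp
  have he2 : e = 2 := by
    have h := halg' ϖ
    rw [hϖ, ev_pow, hram] at h
    have h2 := ev_inj.mp h
    omega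
  subst he2
  -- the key valuation facts
  obtain ⟨hE1, hB⟩ := ramified_key v vL a b c hao hbo hc hnonsq sqd hsqd β hβ hbasis halg'
    ϖL hϖL hva u₀ hu₀o hu₀
  have hu₀'o : v u₀' ≤ ev 0 := by
    rw [hu₀', _root_.map_div₀, Valuation.map_neg, hva, ev_zero, div_one]; exact hu₀o
  intro g hg
  obtain ⟨x, y, hN, rfl⟩ := hg
  by_cases hcase : v y ≤ v x
  · -- w-region : y/x integral
    have hx0 : x ≠ 0 := by
      intro h
      apply hN
      have hy0 : y = 0 := by
        rw [h, _root_.map_zero] at hcase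
        exact (Valuation.zero_iff v).mp (le_antisymm hcase zero_le')
      rw [h, hy0]; ring
    have hvx : v x ≠ 0 := fun h => hx0 ((Valuation.zero_iff v).mp h)
    set w := y / x with hwdef
    have hxw : y = x * w := by rw [hwdef]; field_simp
    have hwo : v w ≤ ev 0 := by
      rw [hwdef, _root_.map_div₀]
      obtain ⟨kx, hkx⟩ := ev_cases hvx
      rcases eq_or_ne (v y) 0 with h0 | h0
      · rw [h0, zero_div]; exact zero_le'
      · obtain ⟨ky, hky⟩ := ev_cases h0
        rw [hky, hkx] at hcase ⊢
        rw [ev_le_ev] at hcase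
        rw [div_eq_mul_inv, ev_inv, ← ev_mul, ev_le_ev]; omega
    have hnorm : ∀ x' y' : F,
        (v (x' * y - x * y') ≤ ev C * v (x * x' - b * (x * y') + a * c * (y * y'))) ↔
        (v (x' * w - y') ≤ ev C * v (x' - b * y' + a * c * (w * y'))) := by
      intro x' y'
      have e1 : x' * y - x * y' = x * (x' * w - y') := by rw [hxw]; ring
      have e2 : x * x' - b * (x * y') + a * c * (y * y')
          = x * (x' - b * y' + a * c * (w * y')) := by rw [hxw]; ring
      rw [e1, e2, Valuation.map_mul, Valuation.map_mul, cancel_scale hvx]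
    -- family-3 representatives never work in the w-region
    have hexcl3 : ∀ x₃' : F, v x₃' ≤ ev 1 →
        v (x₃' * w - 1) ≤ ev C * v (x₃' - b * 1 + a * c * (w * 1)) → False := by
      intro x₃' hx₃'p hrel'
      have hYval : v (x₃' * w - 1) = ev 0 := by
        rw [Valuation.map_sub_eq_of_lt_right v (by
          rw [Valuation.map_one, ← ev_zero]
          refine lt_of_le_of_lt (vmul_le_ev v hx₃'p hwo) (ev_lt_ev.mpr (by omega)))]
        rw [Valuation.map_one, ev_zero]
      have hXb : v (x₃' - b * 1 + a * c * (w * 1)) ≤ ev 0 := by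
        refine vo_add v (vo_sub v (le_trans hx₃'p (ev_le_ev.mpr (by omega))) ?_) ?_
        · rw [mul_one]; exact hbo
        · rw [mul_one]
          exact le_trans (vmul_le_ev v (vmul_le_ev v hao hc.le) hwo)
            (by rw [ev_le_ev]; omega)
      rw [hYval] at hrel'
      have hfin : ev 0 ≤ ev C * ev 0 := le_trans hrel' (mul_le_mul' le_rfl hXb)
      rw [← ev_mul, ev_le_ev] at hfin
      have : (1:ℤ) ≤ (C:ℤ) := by exact_mod_cast hn.trans hnC
      omega
    by_cases hwu : v (w - u₀') ≤ ev 1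
    · -- CASE B : w ≡ u₀' mod p, family 2
      obtain ⟨y₂, ⟨hy₂Y, hy₂close⟩, hy₂uniq⟩ := hY₂rep (w - u₀') hwu
      have hy₂p : v y₂ ≤ ev 1 := hY₂ y₂ hy₂Y
      have hro : v (u₀' + y₂) ≤ ev 0 :=
        vo_add v hu₀'o (le_trans hy₂p (ev_le_ev.mpr (by omega)))
      have hru1 : v (u₀' + y₂ - u₀') ≤ ev 1 := by
        rw [show u₀' + y₂ - u₀' = y₂ by ring]; exact hy₂p
      have hC1 : (1:ℤ) ≤ (C:ℤ) := by exact_mod_cast hn.trans hnC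
      have hXval : v (1 - b * (u₀' + y₂) + a * c * (w * (u₀' + y₂))) = ev 1 :=
        helper2 v hva hbo hc hB hE1 hu₀o ha0 hu₀' hu₀'o hru1 hro (by
          rw [show w - (u₀' + y₂) = w - u₀' - y₂ by ring]
          exact le_trans hy₂close (ev_le_ev.mpr (by omega)))
      have hN'2 : (1:F) ^ 2 - b * 1 * (u₀' + y₂) + a * c * (u₀' + y₂) ^ 2 ≠ 0 := by
        have h5 : v (1 - b * (u₀' + y₂) + a * c * ((u₀' + y₂) * (u₀' + y₂))) = ev 1 :=
          helper2 v hva hbo hc hB hE1 hu₀o ha0 hu₀' hu₀'o hru1 hro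
            (by rw [sub_self, _root_.map_zero]; exact zero_le')
        intro h0
        rw [show (1:F) - b * (u₀' + y₂) + a * c * ((u₀' + y₂) * (u₀' + y₂))
          = (1:F) ^ 2 - b * 1 * (u₀' + y₂) + a * c * (u₀' + y₂) ^ 2 by ring, h0,
          _root_.map_zero] at h5
        exact (ev_ne_zero 1) h5.symm
      refine ⟨tmat a b c 1 (u₀' + y₂), ⟨Or.inr (Or.inl ⟨y₂, hy₂Y, rfl⟩), ?_⟩, ?_⟩
      · refine mem_of_rel v hc hao hbo hn hnC hN hN'2 ?_
        rw [hnorm 1 (u₀' + y₂), hXval,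
          show (1:F) * w - (u₀' + y₂) = w - u₀' - y₂ by ring, ← ev_mul]
        exact le_trans hy₂close (ev_le_ev.mpr (by omega))
      · rintro m' ⟨hfam, u, hu', heq⟩
        rcases hfam with ⟨r', hr'Y, rfl⟩ | ⟨y₂'', hy₂''Y, rfl⟩ | ⟨x₃', hx₃'Y, rfl⟩
        · exfalso
          have hrel' := (rel_of_mem v hc hn hN hu' heq).2
          rw [hnorm 1 r'] at hrel'
          obtain ⟨hr'o, hr'not⟩ := hY₁ r' hr'Y
          have hr'u : v (r' - u₀') = ev 0 := ev0_of (vo_sub v hr'o hu₀'o) hr'not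
          have hYval : v (1 * w - r') = ev 0 := by
            rw [show (1:F) * w - r' = -(r' - u₀' - (w - u₀')) by ring, Valuation.map_neg,
              Valuation.map_sub_eq_of_lt_left v (by
                rw [hr'u]
                exact lt_of_le_of_lt hwu (ev_lt_ev.mpr (by omega)))]
            exact hr'u
          have hXb : v (1 - b * r' + a * c * (w * r')) ≤ ev 0 :=
            helper3 v hbo hr'o hwo hao hc.le
          rw [hYval] at hrel'
          have hfin : ev 0 ≤ ev C * ev 0 := le_trans hrel' (mul_le_mul' le_rfl hXb)
          rw [← ev_mul, ev_le_ev] at hfin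
          omega
        · have hrel' := (rel_of_mem v hc hn hN hu' heq).2
          rw [hnorm 1 (u₀' + y₂'')] at hrel'
          have hy₂''p : v y₂'' ≤ ev 1 := hY₂ _ hy₂''Y
          have hXb : v (1 - b * (u₀' + y₂'') + a * c * (w * (u₀' + y₂''))) ≤ ev 1 :=
            helper2' v hva hbo hc hB hE1 hu₀o ha0 hu₀' hu₀'o
              (by rw [show u₀' + y₂'' - u₀' = y₂'' by ring]; exact hy₂''p)
              (vo_add v hu₀'o (le_trans hy₂''p (ev_le_ev.mpr (by omega))))
              (by rw [show w - (u₀' + y₂'') = w - u₀' - y₂'' by ring]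
                  exact vo_sub v hwu hy₂''p)
          have hclose : v (w - u₀' - y₂'') ≤ ev ((C:ℤ) + 1) := by
            have h1 : v (1 * w - (u₀' + y₂'')) ≤ ev C * ev 1 :=
              le_trans hrel' (mul_le_mul' le_rfl hXb)
            rw [← ev_mul] at h1
            rw [show w - u₀' - y₂'' = 1 * w - (u₀' + y₂'') by ring]
            exact h1
          have heq2 : y₂'' = y₂ := hy₂uniq y₂'' ⟨hy₂''Y, hclose⟩
          rw [heq2]
        · exact absurd ((hnorm x₃' 1).mp (rel_of_mem v hc hn hN hu' heq).2)
            (fun h => hexcl3 x₃' (hY₃ _ hx₃'Y) h)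
    · -- CASE A : w ≢ u₀' mod p, family 1
      obtain ⟨r, ⟨hrY, hrclose⟩, hruniq⟩ := hY₁rep w hwo hwu
      obtain ⟨hro, hrnot⟩ := hY₁ r hrY
      have hru : v (r - u₀') = ev 0 := ev0_of (vo_sub v hro hu₀'o) hrnot
      have hC1 : (1:ℤ) ≤ (C:ℤ) := by exact_mod_cast hn.trans hnC
      have hXval : v (1 - b * r + a * c * (w * r)) = ev 0 :=
        helper1 v hva hbo hc hB hE1 hu₀o ha0 hu₀' hu₀'o hro hru
          (le_trans hrclose (ev_le_ev.mpr (by omega)))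
      have hN'1 : (1:F) ^ 2 - b * 1 * r + a * c * r ^ 2 ≠ 0 := by
        have h5 : v (1 - b * r + a * c * (r * r)) = ev 0 :=
          helper1 v hva hbo hc hB hE1 hu₀o ha0 hu₀' hu₀'o hro hru
            (by rw [sub_self, _root_.map_zero]; exact zero_le')
        intro h0
        rw [show (1:F) - b * r + a * c * (r * r)
          = (1:F) ^ 2 - b * 1 * r + a * c * r ^ 2 by ring, h0, _root_.map_zero] at h5
        exact (ev_ne_zero 0) h5.symm
      refine ⟨tmat a b c 1 r, ⟨Or.inl ⟨r, hrY, rfl⟩, ?_⟩, ?_⟩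
      · refine mem_of_rel v hc hao hbo hn hnC hN hN'1 ?_
        rw [hnorm 1 r, hXval, show (1:F) * w - r = w - r by ring, ← ev_mul]
        exact le_trans hrclose (ev_le_ev.mpr (by omega))
      · rintro m' ⟨hfam, u, hu', heq⟩
        rcases hfam with ⟨r'', hr''Y, rfl⟩ | ⟨y₂'', hy₂''Y, rfl⟩ | ⟨x₃', hx₃'Y, rfl⟩
        · have hrel' := (rel_of_mem v hc hn hN hu' heq).2
          rw [hnorm 1 r''] at hrel'
          have hXb : v (1 - b * r'' + a * c * (w * r'')) ≤ ev 0 :=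
            helper3 v hbo (hY₁ r'' hr''Y).1 hwo hao hc.le
          have hclose'' : v (w - r'') ≤ ev C := by
            have h1 : v (1 * w - r'') ≤ ev C * ev 0 :=
              le_trans hrel' (mul_le_mul' le_rfl hXb)
            rw [← ev_mul] at h1
            rw [show w - r'' = 1 * w - r'' by ring]
            exact le_trans h1 (ev_le_ev.mpr (by omega))
          have heq2 : r'' = r := hruniq r'' ⟨hr''Y, hclose''⟩
          rw [heq2]
        · exfalso
          have hrel' := (rel_of_mem v hc hn hN hu' heq).2
          rw [hnorm 1 (u₀' + y₂'')] at hrel'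
          have hy₂''p : v y₂'' ≤ ev 1 := hY₂ _ hy₂''Y
          have hwu0 : v (w - u₀') = ev 0 := ev0_of (vo_sub v hwo hu₀'o) hwu
          have hYval : v (1 * w - (u₀' + y₂'')) = ev 0 := by
            rw [show (1:F) * w - (u₀' + y₂'') = w - u₀' - y₂'' by ring,
              Valuation.map_sub_eq_of_lt_left v (by
                rw [hwu0]
                exact lt_of_le_of_lt hy₂''p (ev_lt_ev.mpr (by omega)))]
            exact hwu0
          have hXb : v (1 - b * (u₀' + y₂'') + a * c * (w * (u₀' + y₂''))) ≤ ev 0 :=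
            helper3 v hbo (vo_add v hu₀'o (le_trans hy₂''p (ev_le_ev.mpr (by omega))))
              hwo hao hc.le
          rw [hYval] at hrel'
          have hfin : ev 0 ≤ ev C * ev 0 := le_trans hrel' (mul_le_mul' le_rfl hXb)
          rw [← ev_mul, ev_le_ev] at hfin
          omega
        · exact absurd ((hnorm x₃' 1).mp (rel_of_mem v hc hn hN hu' heq).2)
            (fun h => hexcl3 x₃' (hY₃ _ hx₃'Y) h)
  · -- CASE C : p-region, x/y ∈ p, family 3
    have hy0 : y ≠ 0 := fun h => hcase (by rw [h, _root_.map_zero]; exact zero_le')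
    have hvy : v y ≠ 0 := fun h => hy0 ((Valuation.zero_iff v).mp h)
    set p := x / y with hpdef
    have hxp : x = y * p := by rw [hpdef]; field_simp
    have hpo : v p ≤ ev 1 := by
      rw [hpdef, _root_.map_div₀]
      obtain ⟨ky, hky⟩ := ev_cases hvy
      rcases eq_or_ne (v x) 0 with h0 | h0
      · rw [h0, zero_div]; exact zero_le'
      · obtain ⟨kx, hkx⟩ := ev_cases h0
        have hlt : v x < v y := lt_of_not_ge hcase
        rw [hkx, hky] at hlt ⊢
        rw [ev_lt_ev] at hlt
        rw [div_eq_mul_inv, ev_inv, ← ev_mul, ev_le_ev]; omega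
    have hC1 : (1:ℤ) ≤ (C:ℤ) := by exact_mod_cast hn.trans hnC
    have hnorm : ∀ x' y' : F,
        (v (x' * y - x * y') ≤ ev C * v (x * x' - b * (x * y') + a * c * (y * y'))) ↔
        (v (x' - p * y') ≤ ev C * v (p * x' - b * (p * y') + a * c * y')) := by
      intro x' y'
      have e1 : x' * y - x * y' = y * (x' - p * y') := by rw [hxp]; ring
      have e2 : x * x' - b * (x * y') + a * c * (y * y')
          = y * (p * x' - b * (p * y') + a * c * y') := by rw [hxp]; ring
      rw [e1, e2, Valuation.map_mul, Valuation.map_mul, cancel_scale hvy]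
    -- families 1 and 2 never work in the p-region
    have hexcl12 : ∀ r' : F, v r' ≤ ev 0 →
        v (1 - p * r') ≤ ev C * v (p * 1 - b * (p * r') + a * c * r') → False := by
      intro r' hr'o hrel'
      have hYval : v (1 - p * r') = ev 0 := by
        rw [Valuation.map_sub_eq_of_lt_left v (by
          rw [Valuation.map_one, ← ev_zero]
          exact lt_of_le_of_lt (vmul_le_ev v hpo hr'o) (ev_lt_ev.mpr (by omega)))]
        rw [Valuation.map_one, ev_zero]
      have hXb : v (p * 1 - b * (p * r') + a * c * r') ≤ ev 0 := by
        refine vo_add v (vo_sub v ?_ ?_) ?_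
        · rw [mul_one]; exact le_trans hpo (ev_le_ev.mpr (by omega))
        · exact le_trans (vmul_le_ev v hbo (vmul_le_ev v hpo hr'o))
            (by rw [ev_le_ev]; omega)
        · exact le_trans (vmul_le_ev v (vmul_le_ev v hva.le hc.le) hr'o)
            (by rw [ev_le_ev]; omega)
      rw [hYval] at hrel'
      have hfin : ev 0 ≤ ev C * ev 0 := le_trans hrel' (mul_le_mul' le_rfl hXb)
      rw [← ev_mul, ev_le_ev] at hfin
      omega
    obtain ⟨x₃, ⟨hx₃Y, hx₃close⟩, hx₃uniq⟩ := hY₃rep p hpo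
    have hx₃p : v x₃ ≤ ev 1 := hY₃ _ hx₃Y
    have hXval : v (p * x₃ - b * (p * 1) + a * c * 1) = ev 0 := by
      rw [show p * x₃ - b * (p * 1) + a * c * 1 = p * x₃ - b * p + a * c by ring]
      exact helper5 v hva hbo hc hpo hx₃p
    have hN'3 : x₃ ^ 2 - b * x₃ * 1 + a * c * 1 ^ 2 ≠ 0 := by
      have h5 : v (x₃ * x₃ - b * x₃ + a * c) = ev 0 := helper5 v hva hbo hc hx₃p hx₃p
      intro h0
      rw [show x₃ * x₃ - b * x₃ + a * c = x₃ ^ 2 - b * x₃ * 1 + a * c * 1 ^ 2 by ring,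
        h0, _root_.map_zero] at h5
      exact (ev_ne_zero 0) h5.symm
    refine ⟨tmat a b c x₃ 1, ⟨Or.inr (Or.inr ⟨x₃, hx₃Y, rfl⟩), ?_⟩, ?_⟩
    · refine mem_of_rel v hc hao hbo hn hnC hN hN'3 ?_
      rw [hnorm x₃ 1, hXval, show x₃ - p * 1 = -(p - x₃) by ring, Valuation.map_neg,
        ← ev_mul]
      exact le_trans hx₃close (ev_le_ev.mpr (by omega))
    · rintro m' ⟨hfam, u, hu', heq⟩
      rcases hfam with ⟨r', hr'Y, rfl⟩ | ⟨y₂'', hy₂''Y, rfl⟩ | ⟨x₃'', hx₃''Y, rfl⟩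
      · exact absurd ((hnorm 1 r').mp (rel_of_mem v hc hn hN hu' heq).2)
          (fun h => hexcl12 r' (hY₁ r' hr'Y).1 h)
      · refine absurd ((hnorm 1 (u₀' + y₂'')).mp (rel_of_mem v hc hn hN hu' heq).2)
          (fun h => hexcl12 (u₀' + y₂'')
            (vo_add v hu₀'o (le_trans (hY₂ _ hy₂''Y) (ev_le_ev.mpr (by omega)))) h)
      · have hrel' := (rel_of_mem v hc hn hN hu' heq).2
        rw [hnorm x₃'' 1] at hrel'
        have hXb : v (p * x₃'' - b * (p * 1) + a * c * 1) = ev 0 := by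
          rw [show p * x₃'' - b * (p * 1) + a * c * 1 = p * x₃'' - b * p + a * c by ring]
          exact helper5 v hva hbo hc hpo (hY₃ _ hx₃''Y)
        have hclose'' : v (p - x₃'') ≤ ev C := by
          rw [hXb] at hrel'
          rw [show p - x₃'' = -(x₃'' - p * 1) by ring, Valuation.map_neg]
          rw [← ev_mul] at hrel'
          exact le_trans hrel' (ev_le_ev.mpr (by omega))
        have heq2 : x₃'' = x₃ := hx₃uniq x₃'' ⟨hx₃''Y, hclose''⟩
        rw [heq2]
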